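/- Let n be even, a > b, gcd(n, a−b) = 1, and let f : F₂ⁿ → F₂ⁿ be defined by f(x) = (Sᵃ(x) ∧ Sᵇ(x)) ⊕ Sᶜ(x). Let α, β ∈ F₂ⁿ with α ≠ 1ⁿ, and define varibits = Sᵃ(α) ∨ Sᵇ(α), doublebits = Sᵇ(α) ∧ ¬Sᵃ(α) ∧ S^{2a−b}(α), and γ = β ⊕ Sᶜ(α). If γ ∧ ¬varibits = 0ⁿ and (γ ⊕ S^{a−b}(γ)) ∧ doublebits = 0ⁿ, then the differential probability Pr(α →f β) = #{x ∈ F₂ⁿ : f(x) ⊕ f(x ⊕ α) = β} / 2ⁿ equals 2^{−wt(varibits ⊕ doublebits)}. -/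

import Mathlib

/-- Circular left shift by `t` bits: `(rotL n t x) i = x ((i + t) % n)`. -/
def rotL (n t : ℕ) (x : Fin n → Bool) : Fin n → Bool :=
  fun i => x ⟨(i.val + t) % n, Nat.mod_lt _ i.pos⟩

/-- Hamming weight of an `n`-bit vector. -/
def hw {n : ℕ} (x : Fin n → Bool) : ℕ :=
  (Finset.univ.filter fun i => x i = true).card

/-- Differential probability `Pr(α →f β) = #{x : f(x) ⊕ f(x ⊕ α) = β} / 2^n`. -/
noncomputable def diffProb (n : ℕ) (f : (Fin n → Bool) → Fin n → Bool)
    (α β : Fin n → Bool) : ℚ :=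
  ((Finset.univ.filter fun x : Fin n → Bool =>
      (fun i => xor (f x i) (f (fun j => xor (x j) (α j)) i)) = β).card : ℚ) / 2 ^ n


namespace SimonCore

variable {n : ℕ}

/-- Bool to `ZMod 2`. -/
def b2 (b : Bool) : ZMod 2 := if b then 1 else 0

@[simp] lemma b2_true : b2 true = 1 := rfl
@[simp] lemma b2_false : b2 false = 0 := rfl

lemma b2_xor (x y : Bool) : b2 (xor x y) = b2 x + b2 y := by
  cases x <;> cases y <;> decide

lemma b2_and (x y : Bool) : b2 (x && y) = b2 x * b2 y := by
  cases x <;> cases y <;> decide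

lemma b2_inj {x y : Bool} (h : b2 x = b2 y) : x = y := by
  cases x <;> cases y <;> first | rfl | (exfalso; revert h; decide)

section Core

variable [NeZero n] (B : ZMod n → Bool)

/-- The "varibits" in chain coordinates. -/
def V (k : ZMod n) : Bool := B k || B (k + 1)

/-- The "doublebits" in chain coordinates. -/
def D (k : ZMod n) : Bool := B k && (!B (k + 1) && B (k + 2))

/-- Active, non-duplicate rows. -/
def S : Finset (ZMod n) := Finset.univ.filter fun k => V B k = true ∧ D B k = false

/-- One row of the linear system. -/
def row (u : ZMod n → ZMod 2) (k : ZMod n) : ZMod 2 :=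
  b2 (B k) * u (k + 1) + b2 (B (k + 1)) * u k

lemma row_add (u v : ZMod n → ZMod 2) (k : ZMod n) :
    row B (fun j => u j + v j) k = row B u k + row B v k := by
  simp [row]; ring

lemma back_exists (hex : ∃ k0, B k0 = false) (k : ZMod n) : ∃ r : ℕ, B (k - (r : ZMod n)) = false := by
  obtain ⟨k0, hk0⟩ := id hex
  refine ⟨(k - k0).val, ?_⟩
  have : ((k - k0).val : ZMod n) = k - k0 := by simp [ZMod.natCast_val, ZMod.cast_id]
  rw [this]; simpa using hk0

/-- Distance back to the nearest `false` bit. -/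
noncomputable def back (hex : ∃ k0, B k0 = false) (k : ZMod n) : ℕ := Nat.find (back_exists B hex k)

lemma back_spec (hex : ∃ k0, B k0 = false) (k : ZMod n) : B (k - (back B hex k : ℕ)) = false :=
  Nat.find_spec (back_exists B hex k)

lemma back_min (hex : ∃ k0, B k0 = false) {k : ZMod n} {r : ℕ} (h : r < back B hex k) : B (k - (r : ℕ)) = true := by
  have := Nat.find_min (back_exists B hex k) h
  simpa using this

lemma back_lt (hex : ∃ k0, B k0 = false) (k : ZMod n) : back B hex k < n := by
  obtain ⟨k0, hk0⟩ := id hex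
  have h1 : back B hex k ≤ (k - k0).val := by
    apply Nat.find_min'
    have : ((k - k0).val : ZMod n) = k - k0 := by simp [ZMod.natCast_val, ZMod.cast_id]
    rw [this]; simpa using hk0
  exact lt_of_le_of_lt h1 (ZMod.val_lt _)

end Core

end SimonCore

namespace SimonCore

section Dual

variable {n : ℕ} [NeZero n] (B : ZMod n → Bool)

lemma mem_S {k : ZMod n} : k ∈ S B ↔ (V B k = true ∧ D B k = false) := by
  simp [S]

lemma val_neg_one' (hn1 : 1 < n) : (-1 : ZMod n).val = n - 1 := by
  cases n with
  | zero => exact absurd rfl (NeZero.ne 0)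
  | succ m => simpa using ZMod.val_neg_one m

lemma val_sub_one (hn1 : 1 < n) (x : ZMod n) :
    (x - 1).val = if x = 0 then n - 1 else x.val - 1 := by
  by_cases h : x = 0
  · simp [h, val_neg_one' hn1]
  · rw [if_neg h]
    have hv : 1 ≤ x.val := by
      rcases Nat.eq_zero_or_pos x.val with h0 | h0
      · exact absurd ((ZMod.val_eq_zero x).1 h0) h
      · exact h0
    have hx : x = ((x.val : ℕ) : ZMod n) := by simp [ZMod.natCast_val, ZMod.cast_id]
    have : x - 1 = (((x.val - 1 : ℕ)) : ZMod n) := by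
      rw [Nat.cast_sub hv, ← hx]; simp
    rw [this, ZMod.val_cast_of_lt]
    exact lt_of_le_of_lt (Nat.sub_le _ _) (ZMod.val_lt x)

lemma sub_val_cast (k m : ZMod n) : k - (((k - m).val : ℕ) : ZMod n) = m := by
  simp [ZMod.natCast_val, ZMod.cast_id]

/-- Dual vector for row `k`. -/
noncomputable def dual (hex : ∃ k0, B k0 = false) (k : ZMod n) : ZMod n → ZMod 2 :=
  if B k = false then fun j => if j = k then 1 else 0
  else if B (k + 1) = false then fun j => if j = k + 1 then 1 else 0
  else fun j => if (k - j).val < back B hex k then 1 else 0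

lemma row_dual (hex : ∃ k0, B k0 = false) (hn1 : 1 < n) {k m : ZMod n}
    (hk : k ∈ S B) (hm : m ∈ S B) :
    row B (dual B hex k) m = if m = k then 1 else 0 := by
  have hone : (1 : ZMod n) ≠ 0 := by haveI := Fact.mk hn1; exact one_ne_zero
  obtain ⟨hkV, hkD⟩ := (mem_S B).1 hk
  obtain ⟨hmV, hmD⟩ := (mem_S B).1 hm
  by_cases hBk : B k = false
  · -- case 1 : dual = indicator {k}
    have hBk1 : B (k + 1) = true := by
      have hv := hkV; rw [V, hBk] at hv; simpa using hv
    rw [dual, if_pos hBk, row]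
    by_cases hmk : m = k
    · subst hmk
      have hne : m + 1 ≠ m := by
        intro h
        exact hone (by linear_combination h)
      simp [hBk, hBk1, hne]
    · rw [if_neg hmk]
      rcases eq_or_ne (m + 1) k with hm1 | hm1
      · have hBm : B m = false := by
          have hd := hmD
          have h2 : m + 2 = k + 1 := by rw [← hm1]; ring
          rw [D, hm1, hBk, h2, hBk1] at hd
          simpa using hd
        simp [hBm, hmk, hm1]
      · simp [hmk, hm1]
  · -- cases 2/3 : B k = true
    have hBk' : B k = true := by revert hBk; cases B k <;> simp
    by_cases hBk1 : B (k + 1) = false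
    · -- case 2 : dual = indicator {k+1}; B (k+2) = false
      have hBk2 : B (k + 2) = false := by
        have hd := hkD; rw [D, hBk', hBk1] at hd; simpa using hd
      rw [dual, if_neg (by simp [hBk']), if_pos hBk1, row]
      by_cases hmk : m = k
      · subst hmk
        have hne : m ≠ m + 1 := by
          intro h
          exact hone (by linear_combination -h)
        simp [hBk', hBk1, hne]
      · rw [if_neg hmk]
        have h1 : m + 1 ≠ k + 1 := fun h => hmk (by linear_combination h)
        rw [if_neg h1]
        rcases eq_or_ne m (k + 1) with h2 | h2
        · rw [if_pos h2, show m + 1 = k + 2 by rw [h2]; ring, hBk2]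
          simp
        · rw [if_neg h2]; ring
    · -- case 3 : interior run indicator
      have hBk1' : B (k + 1) = true := by revert hBk1; cases B (k+1) <;> simp
      set t := back B hex k with ht
      have ht1 : 1 ≤ t := by
        rcases Nat.eq_zero_or_pos t with h0 | h0
        · exfalso
          have hs := back_spec B hex k
          rw [← ht, h0] at hs
          simp [hBk'] at hs
        · exact h0
      have htn : t < n := by rw [ht]; exact back_lt B hex k
      rw [dual, if_neg (by simp [hBk']), if_neg (by simp [hBk1']), row]
      simp only [← ht]
      set r := (k - m).val with hr
      have hrn : r < n := by rw [hr]; exact ZMod.val_lt _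
      have hmr : m = k - ((r : ℕ) : ZMod n) := by rw [hr]; exact (sub_val_cast k m).symm
      rcases Nat.eq_zero_or_pos r with hr0 | hr1
      · -- r = 0 : m = k
        have hmk : m = k := by
          have h0 : k - m = 0 := (ZMod.val_eq_zero _).1 (by rw [← hr, hr0])
          linear_combination -h0
        subst hmk
        have e1 : (m - (m + 1)).val = n - 1 := by
          have h1 : m - (m + 1) = -1 := by ring
          rw [h1, val_neg_one' hn1]
        rw [e1, if_neg (show ¬ (n - 1 < t) by omega),
          if_pos (show r < t by omega), if_pos rfl]
        simp [hBk', hBk1']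
      · -- r ≥ 1
        have hmk : m ≠ k := by
          intro h
          rw [h] at hr
          simp at hr
          omega
        have hm1 : m + 1 = k - (((r - 1 : ℕ)) : ZMod n) := by
          rw [Nat.cast_sub hr1, hmr]
          push_cast
          ring
        have e1 : (k - (m + 1)).val = r - 1 := by
          have h1 : k - (m + 1) = (((r - 1 : ℕ)) : ZMod n) := by
            rw [hm1]; ring
          rw [h1, ZMod.val_cast_of_lt (by omega)]
        rw [e1, if_neg hmk]
        rcases lt_trichotomy r t with hc | hc | hc
        · have hBm : B m = true := by rw [hmr]; exact back_min B hex hc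
          have hBm1 : B (m + 1) = true := by rw [hm1]; exact back_min B hex (by omega)
          rw [if_pos (show r - 1 < t by omega), if_pos hc, hBm, hBm1]
          decide
        · have hBm : B m = false := by
            rw [hmr, show ((r:ℕ) : ZMod n) = ((t:ℕ) : ZMod n) by rw [hc]]
            exact back_spec B hex k
          rw [if_pos (show r - 1 < t by omega), if_neg (show ¬ (r < t) by omega), hBm]
          simp
        · rw [if_neg (show ¬ (r - 1 < t) by omega), if_neg (show ¬ (r < t) by omega)]
          ring

end Dual

end SimonCore

namespace SimonCore

section Count

variable {n : ℕ} [NeZero n] (B : ZMod n → Bool) (e : ZMod n → ZMod 2)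

/-- Section of the row map. -/
noncomputable def sec (hex : ∃ k0, B k0 = false) (t : {k // k ∈ S B} → ZMod 2) :
    ZMod n → ZMod 2 :=
  fun j => ∑ k ∈ (S B).attach, t k * dual B hex k j

lemma row_sec (hex : ∃ k0, B k0 = false) (hn1 : 1 < n) (t : {k // k ∈ S B} → ZMod 2)
    {m : ZMod n} (hm : m ∈ S B) :
    row B (sec B hex t) m = t ⟨m, hm⟩ := by
  have h1 : row B (sec B hex t) m
      = ∑ k ∈ (S B).attach, t k * row B (dual B hex k) m := by
    rw [row]
    simp only [sec, Finset.mul_sum, ← Finset.sum_add_distrib]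
    refine Finset.sum_congr rfl fun k _ => ?_
    rw [row]; ring
  rw [h1]
  have h2 : ∀ k ∈ (S B).attach, t k * row B (dual B hex (k : ZMod n)) m
      = if (⟨m, hm⟩ : {k // k ∈ S B}) = k then t k else 0 := by
    intro k _
    rw [row_dual B hex hn1 k.2 hm]
    by_cases h : m = (k : ZMod n)
    · rw [if_pos h, if_pos (Subtype.ext h), mul_one]
    · rw [if_neg h, if_neg (fun hh => h (congrArg Subtype.val hh)), mul_zero]
  rw [Finset.sum_congr rfl h2, Finset.sum_ite_eq]
  simp

lemma complete (hi : ∀ k, B k = false → B (k + 1) = false → e k = 0)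
    (hii : ∀ k, B k = true → B (k + 1) = false → B (k + 2) = true → e k = e (k + 1))
    (u : ZMod n → ZMod 2) (h : ∀ k ∈ S B, row B u k = e k) :
    ∀ k, row B u k = e k := by
  intro k
  by_cases hBk : B k = true
  · by_cases hBk1 : B (k + 1) = true
    · refine h k ((mem_S B).2 ⟨by rw [V, hBk, hBk1]; rfl, by rw [D, hBk, hBk1]; rfl⟩)
    · have hBk1' : B (k + 1) = false := by revert hBk1; cases B (k+1) <;> simp
      by_cases hBk2 : B (k + 2) = true
      · -- duplicate row; use row (k+1)
        have hk1S : k + 1 ∈ S B := by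
          refine (mem_S B).2 ⟨?_, ?_⟩
          · rw [V, show k + 1 + 1 = k + 2 by ring, hBk2]; simp
          · rw [D, hBk1']; rfl
        have hrow := h (k + 1) hk1S
        rw [row, hBk1', show k + 1 + 1 = k + 2 by ring, hBk2] at hrow
        rw [row, hBk, hBk1', hii k hBk hBk1' hBk2, ← hrow]
        simp
      · have hBk2' : B (k + 2) = false := by revert hBk2; cases B (k+2) <;> simp
        refine h k ((mem_S B).2 ⟨by rw [V, hBk]; rfl, by rw [D, hBk1', hBk2']; simp⟩)
  · have hBk' : B k = false := by revert hBk; cases B k <;> simp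
    by_cases hBk1 : B (k + 1) = true
    · refine h k ((mem_S B).2 ⟨by rw [V, hBk1]; simp, by rw [D, hBk']; rfl⟩)
    · have hBk1' : B (k + 1) = false := by revert hBk1; cases B (k+1) <;> simp
      rw [row, hBk', hBk1', hi k hBk' hBk1']
      simp

/-- The counting bijection. -/
noncomputable def countEquiv (hex : ∃ k0, B k0 = false) (hn1 : 1 < n)
    (hi : ∀ k, B k = false → B (k + 1) = false → e k = 0)
    (hii : ∀ k, B k = true → B (k + 1) = false → B (k + 2) = true → e k = e (k + 1)) :
    (ZMod n → ZMod 2) ≃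
      {u : ZMod n → ZMod 2 // ∀ k, row B u k = e k} × ({k // k ∈ S B} → ZMod 2) where
  toFun y :=
    (⟨fun j => y j + sec B hex (fun k => row B y k + e k) j, by
      refine complete B e hi hii _ fun k hk => ?_
      rw [row_add, row_sec B hex hn1 _ hk]
      have : ∀ a b : ZMod 2, a + (a + b) = b := by decide
      exact this _ _⟩,
      fun k => row B y k + e k)
  invFun p := fun j => p.1.1 j + sec B hex p.2 j
  left_inv y := by
    funext j
    have : ∀ a b : ZMod 2, a + b + b = a := by decide
    exact this _ _
  right_inv p := by
    obtain ⟨⟨x, hx⟩, t⟩ := p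
    have htm : (fun k : {k // k ∈ S B} => row B (fun j => x j + sec B hex t j) k + e k) = t := by
      funext k
      have h3 : (⟨(k : ZMod n), k.2⟩ : {k // k ∈ S B}) = k := Subtype.ext rfl
      rw [row_add, row_sec B hex hn1 _ k.2, hx, h3]
      have : ∀ a b : ZMod 2, a + b + a = b := by decide
      exact this _ _
    refine Prod.ext ?_ htm
    refine Subtype.ext ?_
    funext j
    simp only [htm]
    have : ∀ a b : ZMod 2, a + b + b = a := by decide
    exact this _ _

theorem core_count (hex : ∃ k0, B k0 = false) (hn1 : 1 < n)
    (hi : ∀ k, B k = false → B (k + 1) = false → e k = 0)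
    (hii : ∀ k, B k = true → B (k + 1) = false → B (k + 2) = true → e k = e (k + 1)) :
    (Finset.univ.filter fun u : ZMod n → ZMod 2 => ∀ k, row B u k = e k).card
      * 2 ^ (S B).card = 2 ^ n := by
  have h1 := Fintype.card_congr (countEquiv B e hex hn1 hi hii)
  rw [Fintype.card_prod, Fintype.card_fun, Fintype.card_fun] at h1
  simp only [ZMod.card, Fintype.card_coe, Fintype.card_subtype, Finset.filter_univ_mem] at h1
  exact h1.symm

lemma S_card_le : (S B).card ≤ n := by
  have := Finset.card_le_univ (S B)
  simpa [ZMod.card] using this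

end Count

end SimonCore

namespace SimonCore

variable {n : ℕ} [NeZero n]

def toF (z : ZMod n) : Fin n := ⟨z.val, z.val_lt⟩

def toZn (i : Fin n) : ZMod n := (i.val : ZMod n)

@[simp] lemma toF_toZn (i : Fin n) : toF (toZn i) = i := by
  apply Fin.ext
  simp [toF, toZn, ZMod.val_natCast, Nat.mod_eq_of_lt i.isLt]

@[simp] lemma toZn_toF (z : ZMod n) : toZn (toF z) = z := by
  simp [toF, toZn, ZMod.natCast_val, ZMod.cast_id]

lemma rotL_toF (t : ℕ) (x : Fin n → Bool) (z : ZMod n) :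
    rotL n t x (toF z) = x (toF (z + (t : ZMod n))) := by
  have hval : (z + (t : ZMod n)).val = (z.val + t) % n := by
    rw [ZMod.val_add, ZMod.val_natCast, Nat.add_mod z.val t n,
      Nat.mod_eq_of_lt z.val_lt]
  show x ⟨((toF z).val + t) % n, _⟩ = x (toF (z + (t : ZMod n)))
  congr 1
  apply Fin.ext
  simp [toF, hval]

def ob (v : ZMod 2) : Bool := decide (v = 1)

@[simp] lemma b2_ob (v : ZMod 2) : b2 (ob v) = v := by revert v; decide

@[simp] lemma ob_b2 (w : Bool) : ob (b2 w) = w := by revert w; decide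

lemma b2_eqiff (x y : Bool) : x = y ↔ b2 x = b2 y := by
  constructor
  · intro h; rw [h]
  · exact b2_inj

lemma boolmain (p q r A Bb C bi : Bool) :
    (xor (xor (p && q) r) (xor ((xor p A) && (xor q Bb)) (xor r C)) = bi) ↔
    ((xor (Bb && p) (A && q)) = xor (xor bi C) (A && Bb)) := by
  revert p q r A Bb C bi; decide

lemma xor_wt (v dd : Bool) (h : dd = true → v = true) :
    ((xor v dd) = true ↔ (v = true ∧ dd = false)) := by
  revert v dd; decide

end SimonCore

namespace SimonCore

lemma b2_eq5 (X Y Z W Q : Bool) :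
    (xor (X && Y) (Z && W) = Q) ↔ (b2 X * b2 Y + b2 Z * b2 W = b2 Q) := by
  revert X Y Z W Q; decide

lemma xorD (u v w : Bool) :
    ((xor (u || v) (v && (!u && w))) = true) ↔ ((v || u) = true ∧ (v && (!u && w)) = false) := by
  revert u v w; decide

end SimonCore


open SimonCore in
theorem simon_diff_prob_valid (n a b c : ℕ) (hn : 0 < n) (hneven : Even n)
    (hab : a > b) (hgcd : Nat.gcd n (a - b) = 1)
    (f : (Fin n → Bool) → Fin n → Bool)
    (hf : ∀ x, f x = fun i => xor (rotL n a x i && rotL n b x i) (rotL n c x i))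
    (α β γ varibits doublebits : Fin n → Bool)
    (hα : α ≠ fun _ => true)
    (hvb : varibits = fun i => (rotL n a α i || rotL n b α i))
    (hdb : doublebits = fun i => (rotL n b α i && (!(rotL n a α i) && rotL n (2 * a - b) α i)))
    (hγ : γ = fun i => xor (β i) (rotL n c α i))
    (h1 : (fun i => γ i && !(varibits i)) = fun _ => false)
    (h2 : (fun i => (xor (γ i) (rotL n (a - b) γ i)) && doublebits i) = fun _ => false) :
    diffProb n f α β =
      (2 : ℚ) ^ (-((hw (fun i => xor (varibits i) (doublebits i)) : ℤ))) := by
  haveI : NeZero n := ⟨hn.ne'⟩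
  have hn1 : 1 < n := by rcases hneven with ⟨m, hm⟩; omega
  set d : ZMod n := ((a - b : ℕ) : ZMod n) with hd
  have hu : IsUnit d := by
    rw [hd]
    exact (ZMod.isUnit_iff_coprime _ n).2 (Nat.coprime_comm.mp hgcd)
  set di : ZMod n := d⁻¹ with hdi
  have hdd : d * di = 1 := ZMod.mul_inv_of_unit d hu
  have hdd' : di * d = 1 := by rw [mul_comm]; exact hdd
  have hba : (a : ZMod n) = (b : ZMod n) + d := by
    rw [hd, Nat.cast_sub (le_of_lt hab)]; ring
  have h2ab : ((2 * a - b : ℕ) : ZMod n) = (b : ZMod n) + (d + d) := by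
    have h : 2 * a - b = (a - b) + (a - b) + b := by omega
    rw [h, Nat.cast_add, Nat.cast_add, ← hd]; ring
  set B : ZMod n → Bool := fun k => α (toF (k * d)) with hB
  set δf : ZMod n → Bool :=
    fun z => xor (γ (toF z)) (α (toF (z + (a : ZMod n))) && α (toF (z + (b : ZMod n)))) with hδf
  set eR : ZMod n → ZMod 2 := fun k => b2 (δf (k * d - (b : ZMod n))) with heR
  -- pointwise hypotheses
  have hvb' : ∀ z : ZMod n,
      varibits (toF z) = (α (toF (z + (a : ZMod n))) || α (toF (z + (b : ZMod n)))) := by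
    intro z; simp only [hvb]; rw [rotL_toF, rotL_toF]
  have hdb' : ∀ z : ZMod n,
      doublebits (toF z) = (α (toF (z + (b : ZMod n))) &&
        (!(α (toF (z + (a : ZMod n)))) && α (toF (z + ((2 * a - b : ℕ) : ZMod n))))) := by
    intro z; simp only [hdb]; rw [rotL_toF, rotL_toF, rotL_toF]
  have hγ' : ∀ z : ZMod n, xor (β (toF z)) (α (toF (z + (c : ZMod n)))) = γ (toF z) := by
    intro z; simp only [hγ]; rw [rotL_toF]
  have h1' : ∀ z : ZMod n,
      (α (toF (z + (a : ZMod n))) || α (toF (z + (b : ZMod n)))) = false → γ (toF z) = false := by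
    intro z hz
    have h := congrFun h1 (toF z)
    rw [hvb' z, hz] at h
    simpa using h
  have h2' : ∀ z : ZMod n, doublebits (toF z) = true → γ (toF z) = γ (toF (z + d)) := by
    intro z hz
    have h := congrFun h2 (toF z)
    rw [hz, rotL_toF, ← hd] at h
    have hlem : ∀ x y : Bool, (xor x y && true) = false → x = y := by decide
    exact hlem _ _ h
  -- index identities
  have ez1 : ∀ k : ZMod n, k * d - (b : ZMod n) + (b : ZMod n) = k * d := fun k => by ring
  have ez2 : ∀ k : ZMod n, k * d - (b : ZMod n) + (a : ZMod n) = (k + 1) * d := fun k => by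
    rw [hba]; ring
  have ez3 : ∀ k : ZMod n,
      k * d - (b : ZMod n) + ((2 * a - b : ℕ) : ZMod n) = (k + 2) * d := fun k => by
    rw [h2ab]; ring
  -- core hypotheses
  have hex : ∃ k0, B k0 = false := by
    obtain ⟨i, hi⟩ := Function.ne_iff.mp hα
    refine ⟨toZn i * di, ?_⟩
    simp only [hB]
    rw [mul_assoc, hdd', mul_one, toF_toZn]
    cases hαi : α i
    · rfl
    · exact absurd hαi hi
  have hic : ∀ k, B k = false → B (k + 1) = false → eR k = 0 := by
    intro k hk hk1
    simp only [hB] at hk hk1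
    have hγz : γ (toF (k * d - (b : ZMod n))) = false := by
      apply h1'
      rw [ez1 k, ez2 k, hk, hk1]
      rfl
    simp only [heR, hδf]
    rw [ez1 k, ez2 k, hk, hk1, hγz]
    rfl
  have hiic : ∀ k, B k = true → B (k + 1) = false → B (k + 2) = true → eR k = eR (k + 1) := by
    intro k hk hk1 hk2
    simp only [hB] at hk hk1 hk2
    have hgz : γ (toF (k * d - (b : ZMod n))) = γ (toF (k * d - (b : ZMod n) + d)) := by
      apply h2'
      rw [hdb' _, ez1 k, ez2 k, ez3 k, hk, hk1, hk2]
      rfl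
    have e4 : (k + 1) * d - (b : ZMod n) = k * d - (b : ZMod n) + d := by ring
    simp only [heR, hδf]
    rw [ez1 k, ez2 k, ez1 (k + 1), ez2 (k + 1), hk1, e4, hgz]
    have : k + 1 + 1 = k + 2 := by ring
    rw [this]
    cases γ (toF (k * d - (b : ZMod n) + d)) <;>
      cases α (toF ((k + 2) * d)) <;> cases α (toF (k * d)) <;> rfl
  -- predicate translation
  have hPred : ∀ x : Fin n → Bool,
      ((fun i => xor (f x i) (f (fun j => xor (x j) (α j)) i)) = β) ↔
      (∀ k : ZMod n, row B (fun k' => b2 (x (toF (k' * d)))) k = eR k) := by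
    intro x
    rw [funext_iff]
    have step1 : (∀ i, xor (f x i) (f (fun j => xor (x j) (α j)) i) = β i) ↔
        (∀ z : ZMod n, xor (f x (toF z)) (f (fun j => xor (x j) (α j)) (toF z)) = β (toF z)) := by
      constructor
      · exact fun h z => h (toF z)
      · intro h i
        have hh := h (toZn i)
        rwa [toF_toZn] at hh
    have step2 : ∀ z : ZMod n,
        (xor (f x (toF z)) (f (fun j => xor (x j) (α j)) (toF z)) = β (toF z)) ↔
        (xor (α (toF (z + (b : ZMod n))) && x (toF (z + (a : ZMod n))))
          (α (toF (z + (a : ZMod n))) && x (toF (z + (b : ZMod n)))) = δf z) := by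
      intro z
      simp only [hf]
      rw [rotL_toF, rotL_toF, rotL_toF, rotL_toF, rotL_toF, rotL_toF]
      rw [boolmain, hγ' z]
    have perk : ∀ k : ZMod n,
        ((xor (α (toF (k * d - (b : ZMod n) + (b : ZMod n)))
            && x (toF (k * d - (b : ZMod n) + (a : ZMod n))))
          (α (toF (k * d - (b : ZMod n) + (a : ZMod n)))
            && x (toF (k * d - (b : ZMod n) + (b : ZMod n))))
          = δf (k * d - (b : ZMod n))) ↔
        (row B (fun k' => b2 (x (toF (k' * d)))) k = eR k)) := by
      intro k
      rw [ez1 k, ez2 k]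
      simp only [heR, row, hB]
      exact b2_eq5 _ _ _ _ _
    refine step1.trans ((forall_congr' step2).trans ?_)
    constructor
    · intro h k
      exact (perk k).1 (h _)
    · intro h z
      have hk := (perk ((z + (b : ZMod n)) * di)).2 (h _)
      have ezz : ((z + (b : ZMod n)) * di) * d - (b : ZMod n) = z := by
        rw [mul_assoc, hdd', mul_one]; ring
      rwa [ezz] at hk
  -- cardinality transfer
  have hcount : (Finset.univ.filter fun x : Fin n → Bool =>
      (fun i => xor (f x i) (f (fun j => xor (x j) (α j)) i)) = β).card
      = (Finset.univ.filter fun u : ZMod n → ZMod 2 => ∀ k, row B u k = eR k).card := by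
    refine Finset.card_bij' (fun x _ => fun k => b2 (x (toF (k * d))))
      (fun u _ => fun i => ob (u (toZn i * di))) ?_ ?_ ?_ ?_
    · intro x hx
      rw [Finset.mem_filter] at hx ⊢
      exact ⟨Finset.mem_univ _, (hPred x).1 hx.2⟩
    · intro u hu
      rw [Finset.mem_filter] at hu ⊢
      refine ⟨Finset.mem_univ _, (hPred _).2 ?_⟩
      have hid : (fun k => b2 ((fun i => ob (u (toZn i * di))) (toF (k * d)))) = u := by
        funext k
        simp only []
        rw [toZn_toF, mul_assoc, hdd, mul_one, b2_ob]
      rw [hid]; exact hu.2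
    · intro x hx
      funext i
      simp only []
      rw [mul_assoc, hdd', mul_one, ob_b2, toF_toZn]
    · intro u hu
      funext k
      simp only []
      rw [toZn_toF, mul_assoc, hdd, mul_one, b2_ob]
  -- weight transfer
  have hpoint : ∀ i : Fin n,
      ((xor (varibits i) (doublebits i)) = true) ↔ ((toZn i + (b : ZMod n)) * di ∈ S B) := by
    intro i
    have ekd : ((toZn i + (b : ZMod n)) * di) * d = toZn i + (b : ZMod n) := by
      rw [mul_assoc, hdd', mul_one]
    have hza : toZn i + (a : ZMod n) = (((toZn i + (b : ZMod n)) * di) + 1) * d := by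
      rw [add_mul, one_mul, ekd, hba]; ring
    have hz2 : toZn i + ((2 * a - b : ℕ) : ZMod n)
        = (((toZn i + (b : ZMod n)) * di) + 2) * d := by
      rw [add_mul, ekd, h2ab]; ring
    rw [mem_S]
    conv_lhs => rw [← toF_toZn i, hvb' (toZn i), hdb' (toZn i), hza, hz2]
    rw [V, D, hB]
    simp only []
    rw [ekd]
    exact xorD _ _ _
  have hhw : hw (fun i => xor (varibits i) (doublebits i)) = (S B).card := by
    refine Finset.card_bij' (fun i _ => (toZn i + (b : ZMod n)) * di)
      (fun k _ => toF (k * d - (b : ZMod n))) ?_ ?_ ?_ ?_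
    · intro i hi
      rw [Finset.mem_filter] at hi
      exact (hpoint i).1 hi.2
    · intro k hk
      rw [Finset.mem_filter]
      refine ⟨Finset.mem_univ _, ?_⟩
      have hkk : (toZn (toF (k * d - (b : ZMod n))) + (b : ZMod n)) * di = k := by
        rw [toZn_toF]
        have h9 : k * d - (b : ZMod n) + (b : ZMod n) = k * d := by ring
        rw [h9, mul_assoc, hdd, mul_one]
      rw [hpoint _, hkk]
      exact hk
    · intro i hi
      have h8 : ((toZn i + (b : ZMod n)) * di) * d - (b : ZMod n) = toZn i := by
        rw [mul_assoc, hdd', mul_one]; ring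
      rw [h8, toF_toZn]
    · intro k hk
      rw [toZn_toF]
      have h9 : k * d - (b : ZMod n) + (b : ZMod n) = k * d := by ring
      rw [h9, mul_assoc, hdd, mul_one]
  -- final arithmetic
  have hcc := core_count B eR hex hn1 hic hiic
  have hwn : (S B).card ≤ n := S_card_le B
  unfold diffProb
  rw [hcount, hhw]
  have hQ : (((Finset.univ.filter fun u : ZMod n → ZMod 2 =>
      ∀ k, row B u k = eR k).card : ℚ)) * 2 ^ (S B).card = 2 ^ n := by
    exact_mod_cast congrArg (Nat.cast : ℕ → ℚ) hcc
  have hzp : (2 : ℚ) ^ (-(((S B).card : ℕ) : ℤ)) = ((2 : ℚ) ^ (S B).card)⁻¹ := by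
    rw [zpow_neg, zpow_natCast]
  rw [hzp, div_eq_iff (ne_of_gt (by positivity)), inv_mul_eq_div,
    eq_div_iff (ne_of_gt (by positivity))]
  exact hQ
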